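/- For a Weil algebra A and a smooth manifold M, the cohomology H^p(M^A, A) of the complex (Λ(M^A,A), d^A) is canonically isomorphic to A ⊗ H^p_dR(M^A); in particular, if M^A is connected then H^0(M^A, A) ≅ A. -/

import Mathlib

open scoped TensorProduct

/-- The cohomology (kernel mod image) at the middle spot of `M₁ → M₂ → M₃`. -/
def cohomOf {R : Type*} [Ring R] {M₁ M₂ M₃ : Type*}
    [AddCommGroup M₁] [AddCommGroup M₂] [AddCommGroup M₃]
    [Module R M₁] [Module R M₂] [Module R M₃]
    (f : M₁ →ₗ[R] M₂) (g : M₂ →ₗ[R] M₃) : Type _ :=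
  ↥(LinearMap.ker g) ⧸ (LinearMap.range f).comap (LinearMap.ker g).subtype

noncomputable instance {R : Type*} [Ring R] {M₁ M₂ M₃ : Type*}
    [AddCommGroup M₁] [AddCommGroup M₂] [AddCommGroup M₃]
    [Module R M₁] [Module R M₂] [Module R M₃]
    (f : M₁ →ₗ[R] M₂) (g : M₂ →ₗ[R] M₃) : AddCommGroup (cohomOf f g) :=
  inferInstanceAs (AddCommGroup (↥(LinearMap.ker g) ⧸
    (LinearMap.range f).comap (LinearMap.ker g).subtype))

noncomputable instance {R : Type*} [Ring R] {M₁ M₂ M₃ : Type*}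
    [AddCommGroup M₁] [AddCommGroup M₂] [AddCommGroup M₃]
    [Module R M₁] [Module R M₂] [Module R M₃]
    (f : M₁ →ₗ[R] M₂) (g : M₂ →ₗ[R] M₃) : Module R (cohomOf f g) :=
  inferInstanceAs (Module R (↥(LinearMap.ker g) ⧸
    (LinearMap.range f).comap (LinearMap.ker g).subtype))

section KerBC
open LinearMap
variable (A : Type) [CommRing A] [Algebra ℝ A] [Module.Flat ℝ A]
variable {M N : Type} [AddCommGroup M] [AddCommGroup N] [Module ℝ M] [Module ℝ N]

noncomputable def kerBCE (g : M →ₗ[ℝ] N) :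
    (A ⊗[ℝ] ↥(ker g)) ≃ₗ[A] ↥(ker (g.baseChange A)) := by
  have hcomp : (g.baseChange A) ∘ₗ ((ker g).subtype.baseChange A) = 0 := by
    rw [← baseChange_comp]
    have h0 : g ∘ₗ (ker g).subtype = 0 := by ext y; exact y.2
    rw [h0]; ext x; simp
  have hinj : Function.Injective ((ker g).subtype.baseChange A) := by
    rw [baseChange_eq_ltensor]
    exact Module.Flat.lTensor_preserves_injective_linearMap _ (Submodule.injective_subtype _)
  refine LinearEquiv.ofBijective
    (((ker g).subtype.baseChange A).codRestrict (ker (g.baseChange A)) (fun x => ?_)) ⟨?_, ?_⟩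
  · rw [mem_ker, ← comp_apply, hcomp]; rfl
  · intro x y hxy
    exact hinj (congrArg Subtype.val hxy)
  · rintro ⟨y, hy⟩
    have hex := Module.Flat.lTensor_exact A (exact_subtype_ker_map g)
    have hy' : (lTensor A g) y = 0 := by
      rw [← baseChange_eq_ltensor]; exact hy
    obtain ⟨x, hx⟩ := (hex y).mp hy'
    refine ⟨x, Subtype.ext ?_⟩
    simpa [baseChange_eq_ltensor] using hx

@[simp] lemma kerBCE_apply (g : M →ₗ[ℝ] N) (x : A ⊗[ℝ] ↥(ker g)) :
    ((kerBCE A g x : ↥(ker (g.baseChange A))) : A ⊗[ℝ] M)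
      = ((ker g).subtype.baseChange A) x := rfl

end KerBC

/-- for a Weil algebra `A` and the de Rham complex `(Λ, d)` of the manifold
`M^A` (formalized as a cochain complex of real vector spaces `Λ : ℕ → Type` with
differentials `d p : Λ p → Λ (p+1)`, `d ∘ d = 0`), the cohomology `H^p(M^A, A)` of the
complex of `A`-valued forms `(A ⊗ Λ, id_A ⊗ d)` is canonically isomorphic in each degree
to `A ⊗ H^p_dR(M^A)`; in particular, if `M^A` is connected (i.e. `H^0_dR(M^A) ≅ ℝ`) then
`H^0(M^A, A) ≅ A`. -/
theorem statement18
    (A : Type) [CommRing A] [Algebra ℝ A] [FiniteDimensional ℝ A] [IsLocalRing A]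
    (Λ : ℕ → Type) [∀ p, AddCommGroup (Λ p)] [∀ p, Module ℝ (Λ p)]
    (d : ∀ p, Λ p →ₗ[ℝ] Λ (p + 1))
    (hdd : ∀ p, (d (p + 1)) ∘ₗ (d p) = 0) :
    (∀ p : ℕ, Nonempty
      ((A ⊗[ℝ] cohomOf (d p) (d (p + 1))) ≃ₗ[A]
        cohomOf ((d p).baseChange A) ((d (p + 1)).baseChange A))) ∧
    Nonempty ((A ⊗[ℝ] ↥(LinearMap.ker (d 0))) ≃ₗ[A] ↥(LinearMap.ker ((d 0).baseChange A))) ∧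
    (Nonempty (↥(LinearMap.ker (d 0)) ≃ₗ[ℝ] ℝ) →
      Nonempty (↥(LinearMap.ker ((d 0).baseChange A)) ≃ₗ[A] A)) := by
  classical
  open LinearMap in
  refine ⟨fun p => ?_, ⟨kerBCE A (d 0)⟩, fun ⟨e⟩ => ⟨(kerBCE A (d 0)).symm.trans
    ((e.baseChange ℝ A _ _).trans (TensorProduct.AlgebraTensorModule.rid ℝ A A))⟩⟩
  set f := d p with hfdef
  set g := d (p + 1) with hgdef
  have hfK : ∀ x, f x ∈ LinearMap.ker g := fun x => by
    have := LinearMap.congr_fun (hdd p) x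
    simpa using this
  set K : Submodule ℝ (Λ (p + 1)) := LinearMap.ker g with hK
  set ι := K.subtype with hι
  set f' : Λ p →ₗ[ℝ] K := f.codRestrict K hfK with hf'
  set S : Submodule ℝ K := (LinearMap.range f).comap ι with hS
  set J : Submodule A (A ⊗[ℝ] Λ (p + 1)) := LinearMap.ker (g.baseChange A) with hJ
  set T : Submodule A J := (LinearMap.range (f.baseChange A)).comap J.subtype with hT
  set e₂ := kerBCE A g with he₂
  -- factorization f = ι ∘ f'
  have hfactor : f.baseChange A = (ι.baseChange A) ∘ₗ (f'.baseChange A) := by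
    rw [← LinearMap.baseChange_comp]
    congr 1
  have hinjι : Function.Injective (ι.baseChange A) := by
    rw [LinearMap.baseChange_eq_ltensor]
    exact Module.Flat.lTensor_preserves_injective_linearMap _ (Submodule.injective_subtype _)
  -- the map Φ
  letI : AddCommGroup J := inferInstance
  set Φ : (A ⊗[ℝ] K) →ₗ[A] (J ⧸ T) := T.mkQ ∘ₗ e₂.toLinearMap with hΦ
  have hΦsurj : Function.Surjective Φ := (Submodule.mkQ_surjective T).comp e₂.surjective
  have hkerΦ : LinearMap.ker Φ = LinearMap.range (f'.baseChange A) := by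
    ext x
    have hmemT : Φ x = 0 ↔ e₂ x ∈ T := by
      rw [hΦ]
      simp [Submodule.Quotient.mk_eq_zero]
    constructor
    · intro hx
      have hx' : ((e₂ x : J) : A ⊗[ℝ] Λ (p + 1)) ∈ LinearMap.range (f.baseChange A) :=
        hmemT.mp hx
      rw [kerBCE_apply] at hx'
      obtain ⟨z, hz⟩ := hx'
      refine ⟨z, hinjι ?_⟩
      rw [← LinearMap.comp_apply, ← hfactor]
      exact hz
    · rintro ⟨z, rfl⟩
      apply hmemT.mpr
      show ((e₂ _ : J) : A ⊗[ℝ] Λ (p + 1)) ∈ LinearMap.range (f.baseChange A)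
      rw [kerBCE_apply, ← LinearMap.comp_apply, ← hfactor]
      exact ⟨z, rfl⟩
  have equiv1 : ((A ⊗[ℝ] K) ⧸ LinearMap.ker Φ) ≃ₗ[A] (J ⧸ T) :=
    Φ.quotKerEquivOfSurjective hΦsurj
  -- the quotient map side
  set π := S.mkQ with hπ
  have hπAsurj : Function.Surjective (π.baseChange A) := by
    show Function.Surjective ⇑(π.baseChange A)
    rw [LinearMap.baseChange_eq_ltensor]
    exact LinearMap.lTensor_surjective A (Submodule.mkQ_surjective S)
  -- f' factors through S
  have hf'S : ∀ x, f' x ∈ S := fun x => ⟨x, rfl⟩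
  set f'' : Λ p →ₗ[ℝ] S := f'.codRestrict S hf'S with hf''
  have hf''surj : Function.Surjective f'' := by
    rintro ⟨y, hy⟩
    obtain ⟨z, hz⟩ := hy
    refine ⟨z, Subtype.ext (Subtype.ext ?_)⟩
    exact hz
  have hfactor2 : f'.baseChange A = (S.subtype.baseChange A) ∘ₗ (f''.baseChange A) := by
    rw [← LinearMap.baseChange_comp]
    congr 1
  have hf''Asurj : Function.Surjective (f''.baseChange A) := by
    show Function.Surjective ⇑(f''.baseChange A)
    rw [LinearMap.baseChange_eq_ltensor]
    exact LinearMap.lTensor_surjective A hf''surj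
  have hkerπ : LinearMap.ker (π.baseChange A) = LinearMap.range (f'.baseChange A) := by
    ext x
    have h1 : x ∈ LinearMap.ker (π.baseChange A) ↔ (LinearMap.lTensor A π) x = 0 := by
      rw [LinearMap.mem_ker, ← LinearMap.baseChange_eq_ltensor]
    have h2 := LinearMap.congr_fun
      (rfl : (LinearMap.lTensor A π) = (LinearMap.lTensor A π)) x
    rw [h1]
    have hset := lTensor_mkQ A S
    constructor
    · intro hx
      have : x ∈ LinearMap.ker (LinearMap.lTensor A (S.mkQ)) := hx
      rw [hset] at this
      obtain ⟨w, hw⟩ := this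
      obtain ⟨u, hu⟩ := hf''Asurj w
      refine ⟨u, ?_⟩
      rw [hfactor2, LinearMap.comp_apply, hu]
      rw [← LinearMap.baseChange_eq_ltensor] at hw
      exact hw
    · rintro ⟨z, rfl⟩
      show (LinearMap.lTensor A (S.mkQ)) _ = 0
      rw [← LinearMap.mem_ker, hset]
      refine ⟨f''.baseChange A z, ?_⟩
      rw [← LinearMap.baseChange_eq_ltensor, ← LinearMap.comp_apply, ← hfactor2]
  have equiv2 : ((A ⊗[ℝ] K) ⧸ LinearMap.ker (π.baseChange A)) ≃ₗ[A] (A ⊗[ℝ] (K ⧸ S)) :=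
    (π.baseChange A).quotKerEquivOfSurjective hπAsurj
  exact ⟨equiv2.symm.trans ((Submodule.quotEquivOfEq _ _ (hkerπ.trans hkerΦ.symm)).trans equiv1)⟩
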